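/- Let H = ([n_H], E_H) be a graph and G = (A ∪ B, E) the bipartite instance constructed from H as described. For every popular matching N in G and every i ∈ [n_H]: either both (a_i,b_i) and (a'_i,b'_i) are in N, or both (a_i,b'_i) and (a'_i,b_i) are in N. -/
import Mathlib


open scoped Classical

/-- A roommates instance: a (finite) graph `(V, adj)` together with a raw preference
relation: `pref u v w` means vertex `u` strictly prefers its neighbor `v` to its
neighbor `w`. -/
structure RoommatesInstance (V : Type) where
  adj : V → V → Prop
  adj_symm : ∀ u v, adj u v → adj v u
  adj_irrefl : ∀ u, ¬ adj u u
  pref : V → V → V → Prop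

namespace RoommatesInstance

variable {V : Type}

/-- The preference relation of each vertex is a strict linear order on its neighbors. -/
def StrictPrefs (G : RoommatesInstance V) : Prop :=
  (∀ u v w, G.pref u v w → G.adj u v ∧ G.adj u w) ∧
  (∀ u v w x, G.pref u v w → G.pref u w x → G.pref u v x) ∧
  (∀ u v w, G.pref u v w → ¬ G.pref u w v) ∧
  (∀ u v w, G.adj u v → G.adj u w → v ≠ w → G.pref u v w ∨ G.pref u w v)

/-- A matching, encoded by the partner function of the corresponding perfect matching
`M̃` of `G̃` (the graph `G` with a self-loop added at every vertex): `m u = u` means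
that `u` is unmatched in `M`, i.e. matched to itself along its self-loop in `M̃`. -/
structure Matching (G : RoommatesInstance V) where
  m : V → V
  invol : ∀ u, m (m u) = u
  adj_of_ne : ∀ u, m u ≠ u → G.adj u (m u)

variable (G : RoommatesInstance V)

/-- `u` considers `v` strictly better than `w`, where each of `v`, `w` is either a
neighbor of `u` or `u` itself (`u` itself stands for being unmatched, which every
vertex ranks below all of its neighbors). -/
def Better (u v w : V) : Prop :=
  (w = u ∧ v ≠ u) ∨ (v ≠ u ∧ w ≠ u ∧ G.pref u v w)

/-- vertex `u` prefers matching `M` to matching `M'` -/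
def Prefers (M M' : G.Matching) (u : V) : Prop :=
  G.Better u (M.m u) (M'.m u)

/-- `φ(M,M')`: the number of vertices preferring `M` to `M'` -/
noncomputable def phi [Fintype V] (M M' : G.Matching) : ℕ :=
  (Finset.univ.filter fun u => G.Prefers M M' u).card

/-- `Δ(M,M') = φ(M,M') - φ(M',M)` -/
noncomputable def delta [Fintype V] (M M' : G.Matching) : ℤ :=
  (G.phi M M' : ℤ) - (G.phi M' M : ℤ)

/-- a matching `M` is popular if it never loses a head-to-head election -/
def Popular [Fintype V] (M : G.Matching) : Prop :=
  ∀ M' : G.Matching, 0 ≤ G.delta M M'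

/-- `(u,v)` is a blocking edge to `M`: both endpoints prefer each other to their
assignments in `M̃`. -/
def Blocks (M : G.Matching) (u v : V) : Prop :=
  G.adj u v ∧ G.Better u v (M.m u) ∧ G.Better v u (M.m v)

/-- `(u,v)` is a negative edge to `M`: both endpoints prefer their assignments in `M̃`
to each other. -/
def Negative (M : G.Matching) (u v : V) : Prop :=
  G.adj u v ∧ G.Better u (M.m u) v ∧ G.Better v (M.m v) u

/-- `cost_M` on the edges of `G̃`: `cost_M(u,v) = 2` for a blocking edge, `-2` for a
negative edge, `0` otherwise; `cost_M(u,u) = 0` if `u` is unmatched in `M` and `-1`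
otherwise. -/
noncomputable def cost (M : G.Matching) (u v : V) : ℤ :=
  if u = v then (if M.m u = u then 0 else -1)
  else if G.Blocks M u v then 2
  else if G.Negative M u v then -2
  else 0

/-- a stable matching: no blocking edge -/
def Stable (M : G.Matching) : Prop := ∀ u v, ¬ G.Blocks M u v

/-- the number of edges of a matching -/
noncomputable def msize [Fintype V] (M : G.Matching) : ℕ :=
  (Finset.univ.filter fun u => M.m u ≠ u).card / 2

theorem cost_comm (M : G.Matching) (u v : V) : G.cost M u v = G.cost M v u := by
  unfold cost
  rcases eq_or_ne u v with rfl | huv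
  · rfl
  · rw [if_neg huv, if_neg (Ne.symm huv)]
    have hb : G.Blocks M u v ↔ G.Blocks M v u :=
      ⟨fun ⟨h1, h2, h3⟩ => ⟨G.adj_symm _ _ h1, h3, h2⟩,
       fun ⟨h1, h2, h3⟩ => ⟨G.adj_symm _ _ h1, h3, h2⟩⟩
    have hn : G.Negative M u v ↔ G.Negative M v u :=
      ⟨fun ⟨h1, h2, h3⟩ => ⟨G.adj_symm _ _ h1, h3, h2⟩,
       fun ⟨h1, h2, h3⟩ => ⟨G.adj_symm _ _ h1, h3, h2⟩⟩
    simp only [hb, hn]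

end RoommatesInstance

/-! ## The bipartite instance `G` constructed from a vertex-cover instance `H` -/

/-- The vertex set of the bipartite instance `G` built from a graph `H` on `Fin n`:
the two special vertices `a_0, b_0`; the gadget `C_i` on `a_i, a'_i, b_i, b'_i` for
every vertex `i` of `H`; and the gadget `D_e` on `s_e, s'_e, s''_e, t_e, t'_e, t''_e`
for every edge `e = (i,j)` of `H` with `i < j` (encoded as `s i j`, ...; for pairs
`(i,j)` that are not an edge of `H` with `i < j` these vertices are isolated, hence
irrelevant). -/
inductive BV (n : ℕ) where
  | a0 | b0
  | a (i : Fin n) | a' (i : Fin n) | b (i : Fin n) | b' (i : Fin n)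
  | s (i j : Fin n) | s' (i j : Fin n) | s'' (i j : Fin n)
  | t (i j : Fin n) | t' (i j : Fin n) | t'' (i j : Fin n)
  deriving DecidableEq, Fintype

variable {n : ℕ}

/-- The edges of `G` (listed in one direction each).  Writing `e = (i,j)` with
`H.Adj i j` and `i < j`: the gadget `D_e` has edges `s_e t'_e`, `s_e t''_e`,
`s'_e t'_e`, `s'_e t_e`, `s''_e t''_e`, `s''_e t_e`, plus `s_e b_j` and `t_e a_i`;
the gadget `C_i` has edges `a_i b_i`, `a_i b'_i`, `a'_i b_i`, `a'_i b'_i`; and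
`a_0` is adjacent to every `b_i`, `b_0` to every `a_i`. -/
def brel (H : SimpleGraph (Fin n)) : BV n → BV n → Prop := fun x y =>
  (∃ i, x = BV.a0 ∧ y = BV.b i) ∨
  (∃ i, x = BV.b0 ∧ y = BV.a i) ∨
  (∃ i, x = BV.a i ∧ (y = BV.b i ∨ y = BV.b' i)) ∨
  (∃ i, x = BV.a' i ∧ (y = BV.b i ∨ y = BV.b' i)) ∨
  (∃ i j, x = BV.a i ∧ y = BV.t i j ∧ H.Adj i j ∧ i < j) ∨
  (∃ i j, x = BV.b j ∧ y = BV.s i j ∧ H.Adj i j ∧ i < j) ∨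
  (∃ i j, x = BV.s i j ∧ (y = BV.t' i j ∨ y = BV.t'' i j) ∧ H.Adj i j ∧ i < j) ∨
  (∃ i j, x = BV.s' i j ∧ (y = BV.t' i j ∨ y = BV.t i j) ∧ H.Adj i j ∧ i < j) ∨
  (∃ i j, x = BV.s'' i j ∧ (y = BV.t'' i j ∨ y = BV.t i j) ∧ H.Adj i j ∧ i < j)

/-- Ranks encoding the preference lists of `G` (lower rank = more preferred), where
`e = (i,j)` with `i < j`:
`s'_e : t'_e ≻ t_e`;  `s''_e : t''_e ≻ t_e`;  `s_e : t'_e ≻ b_j ≻ t''_e`;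
`t'_e : s'_e ≻ s_e`;  `t''_e : s''_e ≻ s_e`;  `t_e : s''_e ≻ a_i ≻ s'_e`;
`a'_i : b_i ≻ b'_i`;  `b'_i : a_i ≻ a'_i`;
`a_i : b_i ≻ b'_i ≻ b_0 ≻ ⋯ (the t_e's, ordered by the other endpoint of e)`;
`b_i : a_i ≻ a'_i ≻ a_0 ≻ ⋯ (the s_e's, ordered by the other endpoint of e)`;
`a_0` and `b_0` rank their neighbors by index. -/
def brank : BV n → BV n → ℕ := fun x y =>
  match x, y with
  | BV.s' _ _, BV.t' _ _ => 0
  | BV.s' _ _, BV.t _ _ => 1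
  | BV.s'' _ _, BV.t'' _ _ => 0
  | BV.s'' _ _, BV.t _ _ => 1
  | BV.s _ _, BV.t' _ _ => 0
  | BV.s _ _, BV.b _ => 1
  | BV.s _ _, BV.t'' _ _ => 2
  | BV.t' _ _, BV.s' _ _ => 0
  | BV.t' _ _, BV.s _ _ => 1
  | BV.t'' _ _, BV.s'' _ _ => 0
  | BV.t'' _ _, BV.s _ _ => 1
  | BV.t _ _, BV.s'' _ _ => 0
  | BV.t _ _, BV.a _ => 1
  | BV.t _ _, BV.s' _ _ => 2
  | BV.a' _, BV.b _ => 0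
  | BV.a' _, BV.b' _ => 1
  | BV.b' _, BV.a _ => 0
  | BV.b' _, BV.a' _ => 1
  | BV.a _, BV.b _ => 0
  | BV.a _, BV.b' _ => 1
  | BV.a _, BV.b0 => 2
  | BV.a _, BV.t _ j => 3 + j.val
  | BV.b _, BV.a _ => 0
  | BV.b _, BV.a' _ => 1
  | BV.b _, BV.a0 => 2
  | BV.b _, BV.s i _ => 3 + i.val
  | BV.a0, BV.b i => i.val
  | BV.b0, BV.a i => i.val
  | _, _ => 0

/-- The bipartite instance `G = (A ∪ B, E)` constructed from the vertex cover
instance `H`. -/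
def BGofH (H : SimpleGraph (Fin n)) : RoommatesInstance (BV n) where
  adj x y := x ≠ y ∧ (brel H x y ∨ brel H y x)
  adj_symm := fun _ _ h => ⟨h.1.symm, h.2.symm⟩
  adj_irrefl := fun _ h => h.1 rfl
  pref u v w :=
    (u ≠ v ∧ (brel H u v ∨ brel H v u)) ∧ (u ≠ w ∧ (brel H u w ∨ brel H w u)) ∧
      brank u v < brank u w

section Helper
open RoommatesInstance BV Finset
variable {n : ℕ} {H : SimpleGraph (Fin n)} {i : Fin n}

lemma not_better_irrefl (u v : BV n) : ¬ (BGofH H).Better u v v := by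
  rintro (⟨h1, h2⟩ | ⟨h1, h2, h3⟩)
  · exact h2 h1
  · exact lt_irrefl _ h3.2.2

lemma not_better_self (u w : BV n) : ¬ (BGofH H).Better u u w := by
  rintro (⟨h1, h2⟩ | ⟨h1, h2, h3⟩)
  · exact h2 rfl
  · exact h1 rfl

lemma better_unmatched {u v : BV n} (h : v ≠ u) : (BGofH H).Better u v u := Or.inl ⟨rfl, h⟩

lemma better_asymm {u v w : BV n} (h : (BGofH H).Better u v w) : ¬ (BGofH H).Better u w v := by
  rcases h with ⟨rfl, h2⟩ | ⟨h1, h2, h3⟩ <;> rintro (⟨e1, e2⟩ | ⟨g1, g2, g3⟩)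
  · exact h2 e1
  · exact g1 rfl
  · exact h1 e1
  · have := h3.2.2; have := g3.2.2; omega

lemma prefers_ne {M M' : (BGofH H).Matching} {u : BV n}
    (h : (BGofH H).Prefers M M' u) : M.m u ≠ M'.m u := by
  intro he
  have h' : (BGofH H).Better u (M.m u) (M'.m u) := h
  rw [he] at h'
  exact not_better_irrefl u _ h'

set_option maxHeartbeats 1000000 in
lemma pref_intro {u v w : BV n} (h1 : (BGofH H).adj u v) (h2 : (BGofH H).adj u w)
    (h3 : brank u v < brank u w) : (BGofH H).pref u v w := ⟨h1, h2, h3⟩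

lemma better_intro {u v w : BV n} (hv : v ≠ u) (hw : w ≠ u) (h1 : (BGofH H).adj u v)
    (h2 : (BGofH H).adj u w) (h3 : brank u v < brank u w) : (BGofH H).Better u v w :=
  Or.inr ⟨hv, hw, pref_intro h1 h2 h3⟩

lemma adj_a'_cases {z : BV n} (h : (BGofH H).adj (BV.a' i) z) : z = BV.b i ∨ z = BV.b' i := by
  obtain ⟨hne, h | h⟩ := h <;> simp [brel] at h <;> tauto

lemma adj_b'_cases {z : BV n} (h : (BGofH H).adj (BV.b' i) z) : z = BV.a i ∨ z = BV.a' i := by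
  obtain ⟨hne, h | h⟩ := h <;> simp [brel] at h <;> tauto

lemma adj_a_cases {z : BV n} (h : (BGofH H).adj (BV.a i) z) :
    z = BV.b i ∨ z = BV.b' i ∨ z = BV.b0 ∨ ∃ j, z = BV.t i j := by
  obtain ⟨hne, h | h⟩ := h <;> simp [brel] at h
  · obtain hh | ⟨j, hj, -⟩ := h
    · tauto
    · exact Or.inr (Or.inr (Or.inr ⟨j, hj⟩))
  · tauto

lemma adj_b_cases {z : BV n} (h : (BGofH H).adj (BV.b i) z) :
    z = BV.a i ∨ z = BV.a' i ∨ z = BV.a0 ∨ ∃ j, z = BV.s j i := by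
  obtain ⟨hne, h | h⟩ := h <;> simp [brel] at h
  · obtain ⟨j, hj, -⟩ := h
    exact Or.inr (Or.inr (Or.inr ⟨j, hj⟩))
  · tauto

lemma adj_ab' : (BGofH H).adj (BV.a i) (BV.b' i) := by simp [BGofH, brel]
lemma adj_ab : (BGofH H).adj (BV.a i) (BV.b i) := by simp [BGofH, brel]
lemma adj_a'b : (BGofH H).adj (BV.a' i) (BV.b i) := by simp [BGofH, brel]
lemma adj_a'b' : (BGofH H).adj (BV.a' i) (BV.b' i) := by simp [BGofH, brel]
lemma adj_b'a : (BGofH H).adj (BV.b' i) (BV.a i) := (BGofH H).adj_symm _ _ adj_ab'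
lemma adj_b'a' : (BGofH H).adj (BV.b' i) (BV.a' i) := (BGofH H).adj_symm _ _ adj_a'b'
lemma adj_ba : (BGofH H).adj (BV.b i) (BV.a i) := (BGofH H).adj_symm _ _ adj_ab
lemma adj_ba' : (BGofH H).adj (BV.b i) (BV.a' i) := (BGofH H).adj_symm _ _ adj_a'b

/-- `a_i` prefers `b'_i` to anything that is not `b_i` or `b'_i`. -/
lemma better_ab' (N : (BGofH H).Matching) (h1 : N.m (BV.a i) ≠ BV.b i)
    (h2 : N.m (BV.a i) ≠ BV.b' i) : (BGofH H).Better (BV.a i) (BV.b' i) (N.m (BV.a i)) := by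
  by_cases h0 : N.m (BV.a i) = BV.a i
  · rw [h0]; exact better_unmatched (by simp)
  · have hadj := N.adj_of_ne _ h0
    refine better_intro (by simp) h0 adj_ab' hadj ?_
    rcases adj_a_cases hadj with h | h | h | ⟨j, h⟩
    · exact absurd h h1
    · exact absurd h h2
    · rw [h]
      have e1 : brank (BV.a i) (BV.b' i) = 1 := rfl
      have e2 : brank (BV.a i) (BV.b0 : BV n) = 2 := rfl
      omega
    · rw [h]
      have e1 : brank (BV.a i) (BV.b' i) = 1 := rfl
      have e2 : brank (BV.a i) (BV.t i j) = 3 + j.val := rfl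
      omega

/-- `b_i` prefers `a'_i` to anything that is not `a_i` or `a'_i`. -/
lemma better_ba' (N : (BGofH H).Matching) (h1 : N.m (BV.b i) ≠ BV.a i)
    (h2 : N.m (BV.b i) ≠ BV.a' i) : (BGofH H).Better (BV.b i) (BV.a' i) (N.m (BV.b i)) := by
  by_cases h0 : N.m (BV.b i) = BV.b i
  · rw [h0]; exact better_unmatched (by simp)
  · have hadj := N.adj_of_ne _ h0
    refine better_intro (by simp) h0 adj_ba' hadj ?_
    rcases adj_b_cases hadj with h | h | h | ⟨j, h⟩
    · exact absurd h h1
    · exact absurd h h2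
    · rw [h]
      have e1 : brank (BV.b i) (BV.a' i) = 1 := rfl
      have e2 : brank (BV.b i) (BV.a0 : BV n) = 2 := rfl
      omega
    · rw [h]
      have e1 : brank (BV.b i) (BV.a' i) = 1 := rfl
      have e2 : brank (BV.b i) (BV.s j i) = 3 + j.val := rfl
      omega

lemma better_b'aa' : (BGofH H).Better (BV.b' i) (BV.a i) (BV.a' i) :=
  better_intro (by simp) (by simp) adj_b'a adj_b'a'
    (by have e1 : brank (BV.b' i) (BV.a i) = 0 := rfl
        have e2 : brank (BV.b' i) (BV.a' i) = 1 := rfl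
        omega)

lemma better_a'bb' : (BGofH H).Better (BV.a' i) (BV.b i) (BV.b' i) :=
  better_intro (by simp) (by simp) adj_a'b adj_a'b'
    (by have e1 : brank (BV.a' i) (BV.b i) = 0 := rfl
        have e2 : brank (BV.a' i) (BV.b' i) = 1 := rfl
        omega)

lemma better_abb' : (BGofH H).Better (BV.a i) (BV.b i) (BV.b' i) :=
  better_intro (by simp) (by simp) adj_ab adj_ab'
    (by have e1 : brank (BV.a i) (BV.b i) = 0 := rfl
        have e2 : brank (BV.a i) (BV.b' i) = 1 := rfl
        omega)

lemma better_baa' : (BGofH H).Better (BV.b i) (BV.a i) (BV.a' i) :=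
  better_intro (by simp) (by simp) adj_ba adj_ba'
    (by have e1 : brank (BV.b i) (BV.a i) = 0 := rfl
        have e2 : brank (BV.b i) (BV.a' i) = 1 := rfl
        omega)

/-- A head-to-head bound on `Δ(N,M)`. -/
lemma delta_le (N M : (BGofH H).Matching) (P Q : Finset (BV n))
    (hP : ∀ u, (BGofH H).Prefers N M u → u ∈ P)
    (hQ : ∀ u ∈ Q, (BGofH H).Prefers M N u) :
    (BGofH H).delta N M ≤ (P.card : ℤ) - Q.card := by
  unfold RoommatesInstance.delta RoommatesInstance.phi
  have h1 : (Finset.univ.filter fun u => (BGofH H).Prefers N M u) ⊆ P := by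
    intro u hu; exact hP u (Finset.mem_filter.1 hu).2
  have h2 : Q ⊆ (Finset.univ.filter fun u => (BGofH H).Prefers M N u) := by
    intro u hu; exact Finset.mem_filter.2 ⟨Finset.mem_univ u, hQ u hu⟩
  have c1 := Finset.card_le_card h1
  have c2 := Finset.card_le_card h2
  omega

end Helper
section Constructions
open RoommatesInstance BV Finset
variable {n : ℕ} {H : SimpleGraph (Fin n)}

/-- partner function of the matching `N` modified to contain `(a_i,b'_i)` and `(a'_i,b_i)` -/
def M2m (N : (BGofH H).Matching) (i : Fin n) : BV n → BV n := fun u =>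
  if u = BV.a i then BV.b' i else if u = BV.b' i then BV.a i
  else if u = BV.a' i then BV.b i else if u = BV.b i then BV.a' i
  else if N.m u = BV.a i ∨ N.m u = BV.b' i ∨ N.m u = BV.a' i ∨ N.m u = BV.b i then u
  else N.m u

variable (N : (BGofH H).Matching) (i : Fin n)

lemma M2m_a : M2m N i (BV.a i) = BV.b' i := by simp [M2m]
lemma M2m_b' : M2m N i (BV.b' i) = BV.a i := by simp [M2m]
lemma M2m_a' : M2m N i (BV.a' i) = BV.b i := by simp [M2m]
lemma M2m_b : M2m N i (BV.b i) = BV.a' i := by simp [M2m]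

lemma M2m_invol (u : BV n) : M2m N i (M2m N i u) = u := by
  by_cases h1 : u = BV.a i; · rw [h1, M2m_a, M2m_b']
  by_cases h2 : u = BV.b' i; · rw [h2, M2m_b', M2m_a]
  by_cases h3 : u = BV.a' i; · rw [h3, M2m_a', M2m_b]
  by_cases h4 : u = BV.b i; · rw [h4, M2m_b, M2m_a']
  by_cases h5 : N.m u = BV.a i ∨ N.m u = BV.b' i ∨ N.m u = BV.a' i ∨ N.m u = BV.b i
  · have e : M2m N i u = u := by simp [M2m, h1, h2, h3, h4, h5]
    rw [e, e]
  · have e : M2m N i u = N.m u := by simp [M2m, h1, h2, h3, h4, h5]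
    rw [e]
    push_neg at h5
    obtain ⟨g1, g2, g3, g4⟩ := h5
    have e2 : N.m (N.m u) = u := N.invol u
    simp [M2m, g1, g2, g3, g4, e2, h1, h2, h3, h4]

lemma M2m_eq_of_notMem {u : BV n} (h1 : u ≠ BV.a i) (h2 : u ≠ BV.b' i) (h3 : u ≠ BV.a' i)
    (h4 : u ≠ BV.b i) (g1 : N.m u ≠ BV.a i) (g2 : N.m u ≠ BV.b' i) (g3 : N.m u ≠ BV.a' i)
    (g4 : N.m u ≠ BV.b i) : M2m N i u = N.m u := by
  simp [M2m, h1, h2, h3, h4, g1, g2, g3, g4]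

/-- the matching `N` modified to contain `(a_i,b'_i)` and `(a'_i,b_i)` -/
def M2 : (BGofH H).Matching where
  m := M2m N i
  invol := M2m_invol N i
  adj_of_ne := by
    intro u hu
    by_cases h1 : u = BV.a i; · rw [h1, M2m_a]; exact adj_ab'
    by_cases h2 : u = BV.b' i; · rw [h2, M2m_b']; exact adj_b'a
    by_cases h3 : u = BV.a' i; · rw [h3, M2m_a']; exact adj_a'b
    by_cases h4 : u = BV.b i; · rw [h4, M2m_b]; exact adj_ba'
    by_cases h5 : N.m u = BV.a i ∨ N.m u = BV.b' i ∨ N.m u = BV.a' i ∨ N.m u = BV.b i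
    · exact absurd (by simp [M2m, h1, h2, h3, h4, h5]) hu
    · have e : M2m N i u = N.m u := by simp [M2m, h1, h2, h3, h4, h5]
      rw [e]
      exact N.adj_of_ne u (by rw [← e]; exact hu)

lemma M2_m : (M2 N i).m = M2m N i := rfl

/-- any vertex whose partner changes is one of the four gadget vertices or an
`N`-partner of one of them -/
lemma M2m_changed {u : BV n} (h : M2m N i u ≠ N.m u) :
    (u = BV.a i ∨ u = BV.b' i ∨ u = BV.a' i ∨ u = BV.b i) ∨
    (u = N.m (BV.a i) ∨ u = N.m (BV.b' i) ∨ u = N.m (BV.a' i) ∨ u = N.m (BV.b i)) := by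
  by_contra hc
  push_neg at hc
  obtain ⟨⟨h1, h2, h3, h4⟩, g1, g2, g3, g4⟩ := hc
  have k1 : N.m u ≠ BV.a i := fun e => g1 (by rw [← e, N.invol])
  have k2 : N.m u ≠ BV.b' i := fun e => g2 (by rw [← e, N.invol])
  have k3 : N.m u ≠ BV.a' i := fun e => g3 (by rw [← e, N.invol])
  have k4 : N.m u ≠ BV.b i := fun e => g4 (by rw [← e, N.invol])
  exact h (M2m_eq_of_notMem N i h1 h2 h3 h4 k1 k2 k3 k4)

/-- partner function of the matching `N` modified to contain `(a'_i,b'_i)` -/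
def M1m (N : (BGofH H).Matching) (i : Fin n) : BV n → BV n := fun u =>
  if u = BV.a' i then BV.b' i else if u = BV.b' i then BV.a' i
  else if N.m u = BV.a' i ∨ N.m u = BV.b' i then u
  else N.m u

lemma M1m_a' : M1m N i (BV.a' i) = BV.b' i := by simp [M1m]
lemma M1m_b' : M1m N i (BV.b' i) = BV.a' i := by simp [M1m]

lemma M1m_invol (u : BV n) : M1m N i (M1m N i u) = u := by
  by_cases h1 : u = BV.a' i; · rw [h1, M1m_a', M1m_b']
  by_cases h2 : u = BV.b' i; · rw [h2, M1m_b', M1m_a']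
  by_cases h5 : N.m u = BV.a' i ∨ N.m u = BV.b' i
  · have e : M1m N i u = u := by simp [M1m, h1, h2, h5]
    rw [e, e]
  · have e : M1m N i u = N.m u := by simp [M1m, h1, h2, h5]
    rw [e]
    push_neg at h5
    obtain ⟨g1, g2⟩ := h5
    have e2 : N.m (N.m u) = u := N.invol u
    simp [M1m, g1, g2, e2, h1, h2]

lemma M1m_eq_of_notMem {u : BV n} (h1 : u ≠ BV.a' i) (h2 : u ≠ BV.b' i)
    (g1 : N.m u ≠ BV.a' i) (g2 : N.m u ≠ BV.b' i) : M1m N i u = N.m u := by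
  simp [M1m, h1, h2, g1, g2]

/-- the matching `N` modified to contain `(a'_i,b'_i)` -/
def M1 : (BGofH H).Matching where
  m := M1m N i
  invol := M1m_invol N i
  adj_of_ne := by
    intro u hu
    by_cases h1 : u = BV.a' i; · rw [h1, M1m_a']; exact adj_a'b'
    by_cases h2 : u = BV.b' i; · rw [h2, M1m_b']; exact adj_b'a'
    by_cases h5 : N.m u = BV.a' i ∨ N.m u = BV.b' i
    · exact absurd (by simp [M1m, h1, h2, h5]) hu
    · have e : M1m N i u = N.m u := by simp [M1m, h1, h2, h5]
      rw [e]
      exact N.adj_of_ne u (by rw [← e]; exact hu)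

lemma M1_m : (M1 N i).m = M1m N i := rfl

lemma M1m_changed {u : BV n} (h : M1m N i u ≠ N.m u) :
    (u = BV.a' i ∨ u = BV.b' i) ∨ (u = N.m (BV.a' i) ∨ u = N.m (BV.b' i)) := by
  by_contra hc
  push_neg at hc
  obtain ⟨⟨h1, h2⟩, g1, g2⟩ := hc
  have k1 : N.m u ≠ BV.a' i := fun e => g1 (by rw [← e, N.invol])
  have k2 : N.m u ≠ BV.b' i := fun e => g2 (by rw [← e, N.invol])
  exact h (M1m_eq_of_notMem N i h1 h2 k1 k2)

end Constructions
section Refutations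
open RoommatesInstance BV Finset
variable {n : ℕ} {H : SimpleGraph (Fin n)} {i : Fin n} {N : (BGofH H).Matching}

/-- Case: `a'_i—b'_i ∈ N` but `a_i—b_i ∉ N`. -/
lemma refuteR2 (hN : (BGofH H).Popular N) (hp : N.m (BV.a' i) = BV.b' i)
    (hx : N.m (BV.a i) ≠ BV.b i) : False := by
  have hq : N.m (BV.b' i) = BV.a' i := by rw [← hp, N.invol]
  have hx2 : N.m (BV.a i) ≠ BV.b' i := fun e => by
    have : N.m (BV.b' i) = BV.a i := by rw [← e, N.invol]
    rw [hq] at this; exact absurd this (by simp)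
  have hy1 : N.m (BV.b i) ≠ BV.a i := fun e => hx (by rw [← e, N.invol])
  have hy2 : N.m (BV.b i) ≠ BV.a' i := fun e => by
    have : N.m (BV.a' i) = BV.b i := by rw [← e, N.invol]
    rw [hp] at this; exact absurd this (by simp)
  have hBa := better_ab' N hx hx2
  have hBb := better_ba' N hy1 hy2
  have hQ : ∀ u ∈ ({BV.a i, BV.b' i, BV.a' i, BV.b i} : Finset (BV n)),
      (BGofH H).Prefers (M2 N i) N u := by
    intro u hu
    simp only [Finset.mem_insert, Finset.mem_singleton] at hu
    rcases hu with rfl | rfl | rfl | rfl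
    · show (BGofH H).Better _ (M2m N i (BV.a i)) _
      rw [M2m_a]; exact hBa
    · show (BGofH H).Better _ (M2m N i (BV.b' i)) _
      rw [M2m_b', hq]; exact better_b'aa'
    · show (BGofH H).Better _ (M2m N i (BV.a' i)) _
      rw [M2m_a', hp]; exact better_a'bb'
    · show (BGofH H).Better _ (M2m N i (BV.b i)) _
      rw [M2m_b]; exact hBb
  have hP : ∀ u, (BGofH H).Prefers N (M2 N i) u →
      u ∈ ({N.m (BV.a i), N.m (BV.b i)} : Finset (BV n)) := by
    intro u hu
    have hne : M2m N i u ≠ N.m u := (prefers_ne hu).symm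
    rcases M2m_changed N i hne with (rfl | rfl | rfl | rfl) | (rfl | h | h | rfl)
    · have hu' : (BGofH H).Better (BV.a i) (N.m (BV.a i)) (M2m N i (BV.a i)) := hu
      rw [M2m_a] at hu'
      exact absurd hu' (better_asymm hBa)
    · have hu' : (BGofH H).Better (BV.b' i) (N.m (BV.b' i)) (M2m N i (BV.b' i)) := hu
      rw [M2m_b', hq] at hu'
      exact absurd hu' (better_asymm better_b'aa')
    · have hu' : (BGofH H).Better (BV.a' i) (N.m (BV.a' i)) (M2m N i (BV.a' i)) := hu
      rw [M2m_a', hp] at hu'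
      exact absurd hu' (better_asymm better_a'bb')
    · have hu' : (BGofH H).Better (BV.b i) (N.m (BV.b i)) (M2m N i (BV.b i)) := hu
      rw [M2m_b] at hu'
      exact absurd hu' (better_asymm hBb)
    · simp
    · rw [hq] at h; subst h
      have hu' : (BGofH H).Better (BV.a' i) (N.m (BV.a' i)) (M2m N i (BV.a' i)) := hu
      rw [M2m_a', hp] at hu'
      exact absurd hu' (better_asymm better_a'bb')
    · rw [hp] at h; subst h
      have hu' : (BGofH H).Better (BV.b' i) (N.m (BV.b' i)) (M2m N i (BV.b' i)) := hu
      rw [M2m_b', hq] at hu'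
      exact absurd hu' (better_asymm better_b'aa')
    · simp
  have hle := delta_le N (M2 N i) _ _ hP hQ
  have hd := hN (M2 N i)
  have c1 : ({N.m (BV.a i), N.m (BV.b i)} : Finset (BV n)).card ≤ 2 :=
    (Finset.card_insert_le _ _).trans (by simp)
  have c2 : ({BV.a i, BV.b' i, BV.a' i, BV.b i} : Finset (BV n)).card = 4 := by
    rw [Finset.card_insert_of_notMem (by simp), Finset.card_insert_of_notMem (by simp),
      Finset.card_insert_of_notMem (by simp), Finset.card_singleton]
  rw [c2] at hle
  have : ((({N.m (BV.a i), N.m (BV.b i)} : Finset (BV n)).card : ℤ)) ≤ 2 := by exact_mod_cast c1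
  omega

end Refutations
section Refutations2
open RoommatesInstance BV Finset
variable {n : ℕ} {H : SimpleGraph (Fin n)} {i : Fin n} {N : (BGofH H).Matching}

/-- Case: `a'_i—b_i ∈ N` but `b'_i` unmatched. -/
lemma refuteR3 (hN : (BGofH H).Popular N) (hp : N.m (BV.a' i) = BV.b i)
    (hq : N.m (BV.b' i) = BV.b' i) : False := by
  have hy : N.m (BV.b i) = BV.a' i := by rw [← hp, N.invol]
  have hx1 : N.m (BV.a i) ≠ BV.b i := fun e => by
    have : N.m (BV.b i) = BV.a i := by rw [← e, N.invol]
    rw [hy] at this; exact absurd this (by simp)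
  have hx2 : N.m (BV.a i) ≠ BV.b' i := fun e => by
    have : N.m (BV.b' i) = BV.a i := by rw [← e, N.invol]
    rw [hq] at this; exact absurd this (by simp)
  have hBa := better_ab' N hx1 hx2
  have hQ : ∀ u ∈ ({BV.a i, BV.b' i} : Finset (BV n)), (BGofH H).Prefers (M2 N i) N u := by
    intro u hu
    simp only [Finset.mem_insert, Finset.mem_singleton] at hu
    rcases hu with rfl | rfl
    · show (BGofH H).Better _ (M2m N i (BV.a i)) _
      rw [M2m_a]; exact hBa
    · show (BGofH H).Better _ (M2m N i (BV.b' i)) _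
      rw [M2m_b', hq]; exact better_unmatched (by simp)
  have hP : ∀ u, (BGofH H).Prefers N (M2 N i) u →
      u ∈ ({N.m (BV.a i)} : Finset (BV n)) := by
    intro u hu
    have hne : M2m N i u ≠ N.m u := (prefers_ne hu).symm
    have cb' : ¬ (BGofH H).Prefers N (M2 N i) (BV.b' i) := by
      intro hu'
      have h2 : (BGofH H).Better (BV.b' i) (N.m (BV.b' i)) (M2m N i (BV.b' i)) := hu'
      rw [M2m_b', hq] at h2
      exact not_better_self _ _ h2
    have ca' : ¬ (BGofH H).Prefers N (M2 N i) (BV.a' i) := by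
      intro hu'
      have h2 : (BGofH H).Better (BV.a' i) (N.m (BV.a' i)) (M2m N i (BV.a' i)) := hu'
      rw [M2m_a', hp] at h2
      exact not_better_irrefl _ _ h2
    have cb : ¬ (BGofH H).Prefers N (M2 N i) (BV.b i) := by
      intro hu'
      have h2 : (BGofH H).Better (BV.b i) (N.m (BV.b i)) (M2m N i (BV.b i)) := hu'
      rw [M2m_b, hy] at h2
      exact not_better_irrefl _ _ h2
    rcases M2m_changed N i hne with (rfl | rfl | rfl | rfl) | (rfl | h | h | h)
    · have hu' : (BGofH H).Better (BV.a i) (N.m (BV.a i)) (M2m N i (BV.a i)) := hu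
      rw [M2m_a] at hu'
      exact absurd hu' (better_asymm hBa)
    · exact absurd hu cb'
    · exact absurd hu ca'
    · exact absurd hu cb
    · simp
    · rw [hq] at h; subst h; exact absurd hu cb'
    · rw [hp] at h; subst h; exact absurd hu cb
    · rw [hy] at h; subst h; exact absurd hu ca'
  have hle := delta_le N (M2 N i) _ _ hP hQ
  have hd := hN (M2 N i)
  have c2 : ({BV.a i, BV.b' i} : Finset (BV n)).card = 2 := by
    rw [Finset.card_insert_of_notMem (by simp), Finset.card_singleton]
  rw [c2, Finset.card_singleton] at hle
  omega

/-- Case: `a_i—b'_i ∈ N` but `a'_i` unmatched. -/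
lemma refuteR4 (hN : (BGofH H).Popular N) (hp : N.m (BV.a' i) = BV.a' i)
    (hq : N.m (BV.b' i) = BV.a i) : False := by
  have hx : N.m (BV.a i) = BV.b' i := by rw [← hq, N.invol]
  have hy1 : N.m (BV.b i) ≠ BV.a i := fun e => by
    have : N.m (BV.a i) = BV.b i := by rw [← e, N.invol]
    rw [hx] at this; exact absurd this (by simp)
  have hy2 : N.m (BV.b i) ≠ BV.a' i := fun e => by
    have : N.m (BV.a' i) = BV.b i := by rw [← e, N.invol]
    rw [hp] at this; exact absurd this (by simp)
  have hBb := better_ba' N hy1 hy2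
  have hQ : ∀ u ∈ ({BV.a' i, BV.b i} : Finset (BV n)), (BGofH H).Prefers (M2 N i) N u := by
    intro u hu
    simp only [Finset.mem_insert, Finset.mem_singleton] at hu
    rcases hu with rfl | rfl
    · show (BGofH H).Better _ (M2m N i (BV.a' i)) _
      rw [M2m_a', hp]; exact better_unmatched (by simp)
    · show (BGofH H).Better _ (M2m N i (BV.b i)) _
      rw [M2m_b]; exact hBb
  have hP : ∀ u, (BGofH H).Prefers N (M2 N i) u →
      u ∈ ({N.m (BV.b i)} : Finset (BV n)) := by
    intro u hu
    have hne : M2m N i u ≠ N.m u := (prefers_ne hu).symm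
    have ca : ¬ (BGofH H).Prefers N (M2 N i) (BV.a i) := by
      intro hu'
      have h2 : (BGofH H).Better (BV.a i) (N.m (BV.a i)) (M2m N i (BV.a i)) := hu'
      rw [M2m_a, hx] at h2
      exact not_better_irrefl _ _ h2
    have cb' : ¬ (BGofH H).Prefers N (M2 N i) (BV.b' i) := by
      intro hu'
      have h2 : (BGofH H).Better (BV.b' i) (N.m (BV.b' i)) (M2m N i (BV.b' i)) := hu'
      rw [M2m_b', hq] at h2
      exact not_better_irrefl _ _ h2
    have ca' : ¬ (BGofH H).Prefers N (M2 N i) (BV.a' i) := by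
      intro hu'
      have h2 : (BGofH H).Better (BV.a' i) (N.m (BV.a' i)) (M2m N i (BV.a' i)) := hu'
      rw [M2m_a', hp] at h2
      exact not_better_self _ _ h2
    rcases M2m_changed N i hne with (rfl | rfl | rfl | rfl) | (h | h | h | rfl)
    · exact absurd hu ca
    · exact absurd hu cb'
    · exact absurd hu ca'
    · have hu' : (BGofH H).Better (BV.b i) (N.m (BV.b i)) (M2m N i (BV.b i)) := hu
      rw [M2m_b] at hu'
      exact absurd hu' (better_asymm hBb)
    · rw [hx] at h; subst h; exact absurd hu cb'
    · rw [hq] at h; subst h; exact absurd hu ca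
    · rw [hp] at h; subst h; exact absurd hu ca'
    · simp
  have hle := delta_le N (M2 N i) _ _ hP hQ
  have hd := hN (M2 N i)
  have c2 : ({BV.a' i, BV.b i} : Finset (BV n)).card = 2 := by
    rw [Finset.card_insert_of_notMem (by simp), Finset.card_singleton]
  rw [c2, Finset.card_singleton] at hle
  omega

/-- Case: both `a'_i` and `b'_i` unmatched. -/
lemma refuteR1 (hN : (BGofH H).Popular N) (hp : N.m (BV.a' i) = BV.a' i)
    (hq : N.m (BV.b' i) = BV.b' i) : False := by
  have hQ : ∀ u ∈ ({BV.a' i, BV.b' i} : Finset (BV n)), (BGofH H).Prefers (M1 N i) N u := by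
    intro u hu
    simp only [Finset.mem_insert, Finset.mem_singleton] at hu
    rcases hu with rfl | rfl
    · show (BGofH H).Better _ (M1m N i (BV.a' i)) _
      rw [M1m_a', hp]; exact better_unmatched (by simp)
    · show (BGofH H).Better _ (M1m N i (BV.b' i)) _
      rw [M1m_b', hq]; exact better_unmatched (by simp)
  have hP : ∀ u, (BGofH H).Prefers N (M1 N i) u → u ∈ (∅ : Finset (BV n)) := by
    intro u hu
    have hne : M1m N i u ≠ N.m u := (prefers_ne hu).symm
    have ca' : ¬ (BGofH H).Prefers N (M1 N i) (BV.a' i) := by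
      intro hu'
      have h2 : (BGofH H).Better (BV.a' i) (N.m (BV.a' i)) (M1m N i (BV.a' i)) := hu'
      rw [hp] at h2
      exact not_better_self _ _ h2
    have cb' : ¬ (BGofH H).Prefers N (M1 N i) (BV.b' i) := by
      intro hu'
      have h2 : (BGofH H).Better (BV.b' i) (N.m (BV.b' i)) (M1m N i (BV.b' i)) := hu'
      rw [hq] at h2
      exact not_better_self _ _ h2
    rcases M1m_changed N i hne with (rfl | rfl) | (h | h)
    · exact absurd hu ca'
    · exact absurd hu cb'
    · rw [hp] at h; subst h; exact absurd hu ca'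
    · rw [hq] at h; subst h; exact absurd hu cb'
  have hle := delta_le N (M1 N i) _ _ hP hQ
  have hd := hN (M1 N i)
  have c2 : ({BV.a' i, BV.b' i} : Finset (BV n)).card = 2 := by
    rw [Finset.card_insert_of_notMem (by simp), Finset.card_singleton]
  rw [c2, Finset.card_empty] at hle
  omega

end Refutations2
open RoommatesInstance in
/-- For every popular matching `N` in `G` and every `i`: either
`(a_i,b_i), (a'_i,b'_i) ∈ N`, or `(a_i,b'_i), (a'_i,b_i) ∈ N`. -/
theorem popular_structure_on_Ci {n : ℕ} (H : SimpleGraph (Fin n))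
    (N : (BGofH H).Matching) (hN : (BGofH H).Popular N) (i : Fin n) :
    (N.m (BV.a i) = BV.b i ∧ N.m (BV.a' i) = BV.b' i) ∨
      (N.m (BV.a i) = BV.b' i ∧ N.m (BV.a' i) = BV.b i) := by
  by_cases hpu : N.m (BV.a' i) = BV.a' i
  · by_cases hqu : N.m (BV.b' i) = BV.b' i
    · exact (refuteR1 hN hpu hqu).elim
    · rcases adj_b'_cases (N.adj_of_ne _ hqu) with h | h
      · exact (refuteR4 hN hpu h).elim
      · have : N.m (BV.a' i) = BV.b' i := by rw [← h, N.invol]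
        rw [hpu] at this
        exact absurd this (by simp)
  · rcases adj_a'_cases (N.adj_of_ne _ hpu) with hp | hp
    · by_cases hqu : N.m (BV.b' i) = BV.b' i
      · exact (refuteR3 hN hp hqu).elim
      · rcases adj_b'_cases (N.adj_of_ne _ hqu) with h | h
        · exact Or.inr ⟨by rw [← h, N.invol], hp⟩
        · have : N.m (BV.a' i) = BV.b' i := by rw [← h, N.invol]
          rw [hp] at this
          exact absurd this (by simp)
    · by_cases hx : N.m (BV.a i) = BV.b i
      · exact Or.inl ⟨hx, hp⟩
      · exact (refuteR2 hN hp hx).elim
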